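/- Suppose each f_i is ℓ-smooth, λ ∈ Δ^m, and d = ∑_i λ_i ∇f_i(θ) is the weighted gradient. If for every i one has ⟨∇f_i(θ), d⟩ ≥ ‖d‖², then taking a step θ⁺ = θ − αd with 0 < α ≤ 1/ℓ guarantees f_i(θ⁺) ≤ f_i(θ) − (α/2)‖d‖² for every task i. -/

import Mathlib

open RealInnerProductSpace

lemma descent_lemma {d : ℕ} (f : EuclideanSpace ℝ (Fin d) → ℝ) (ℓ : ℝ) (hℓ : 0 ≤ ℓ)
    (hdiff : Differentiable ℝ f)
    (hlip : ∀ θ₁ θ₂, ‖gradient f θ₁ - gradient f θ₂‖ ≤ ℓ * ‖θ₁ - θ₂‖)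
    (x h : EuclideanSpace ℝ (Fin d)) :
    f (x + h) ≤ f x + ⟪gradient f x, h⟫ + ℓ / 2 * ‖h‖ ^ 2 := by
  set g : ℝ → ℝ := fun t => f (x + t • h) with hg
  have hline : ∀ t : ℝ, HasDerivAt (fun t : ℝ => x + t • h) h t := fun t => by
    simpa using ((hasDerivAt_id t).smul_const h).const_add x
  have hgd : ∀ t : ℝ, HasDerivAt g ⟪gradient f (x + t • h), h⟫ t := by
    intro t
    have := ((hdiff (x + t • h)).hasGradientAt.hasFDerivAt).comp_hasDerivAt t (hline t)
    simpa [InnerProductSpace.toDual, Function.comp_def, hg] using this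
  set φ : ℝ → ℝ := fun t =>
    f x + t * ⟪gradient f x, h⟫ + ℓ * t ^ 2 / 2 * ‖h‖ ^ 2 - g t with hφ
  have hφd : ∀ t : ℝ, HasDerivAt φ
      (⟪gradient f x, h⟫ + ℓ * t * ‖h‖ ^ 2 - ⟪gradient f (x + t • h), h⟫) t := by
    intro t
    have h1 : HasDerivAt (fun t : ℝ => f x + t * ⟪gradient f x, h⟫ + ℓ * t ^ 2 / 2 * ‖h‖ ^ 2)
        (⟪gradient f x, h⟫ + ℓ * t * ‖h‖ ^ 2) t := by
      have : HasDerivAt (fun t : ℝ => ℓ * t ^ 2 / 2 * ‖h‖ ^ 2) (ℓ * t * ‖h‖ ^ 2) t := by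
        have := ((hasDerivAt_pow 2 t).const_mul ℓ).div_const 2
        have := this.mul_const (‖h‖ ^ 2)
        refine this.congr_deriv ?_
        rw [show (2:ℕ) - 1 = 1 from rfl]
        push_cast
        ring
      have h2 : HasDerivAt (fun t : ℝ => f x + t * ⟪gradient f x, h⟫)
          (⟪gradient f x, h⟫) t := by
        simpa using ((hasDerivAt_id t).mul_const ⟪gradient f x, h⟫).const_add (f x)
      exact h2.add this
    exact h1.sub (hgd t)
  have hmono : MonotoneOn φ (Set.Icc (0:ℝ) 1) := by
    apply monotoneOn_of_deriv_nonneg (convex_Icc 0 1)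
    · exact (Continuous.continuousOn (by
        have : Differentiable ℝ φ := fun t => (hφd t).differentiableAt
        exact this.continuous))
    · intro t ht
      exact ((hφd t).differentiableAt).differentiableWithinAt
    · intro t ht
      rw [(hφd t).deriv]
      have ht0 : 0 ≤ t := le_of_lt (Set.mem_Ioo.mp (by simpa using ht)).1
      have hbound : ⟪gradient f (x + t • h), h⟫ - ⟪gradient f x, h⟫ ≤ ℓ * t * ‖h‖ ^ 2 := by
        have := real_inner_le_norm (gradient f (x + t • h) - gradient f x) h
        have hl := hlip (x + t • h) x
        have hnorm : ‖x + t • h - x‖ = t * ‖h‖ := by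
          simp [norm_smul, abs_of_nonneg ht0]
        rw [inner_sub_left] at this
        calc ⟪gradient f (x + t • h), h⟫ - ⟪gradient f x, h⟫
            ≤ ‖gradient f (x + t • h) - gradient f x‖ * ‖h‖ := this
          _ ≤ (ℓ * (t * ‖h‖)) * ‖h‖ := by
              apply mul_le_mul_of_nonneg_right _ (norm_nonneg h)
              rw [hnorm] at hl; exact hl
          _ = ℓ * t * ‖h‖ ^ 2 := by ring
      linarith
  have h01 : φ 0 ≤ φ 1 := hmono (by norm_num) (by norm_num) (by norm_num)
  have h0 : φ 0 = 0 := by simp [hφ, hg]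
  have h1 : φ 1 = f x + ⟪gradient f x, h⟫ + ℓ / 2 * ‖h‖ ^ 2 - f (x + h) := by
    simp [hφ, hg]
  rw [h0, h1] at h01
  linarith

theorem simultaneous_descent {d m : ℕ}
    (f : Fin m → EuclideanSpace ℝ (Fin d) → ℝ) (ℓ : ℝ) (hℓ : 0 < ℓ)
    (hdiff : ∀ i, Differentiable ℝ (f i))
    (hlip : ∀ i θ₁ θ₂, ‖gradient (f i) θ₁ - gradient (f i) θ₂‖ ≤ ℓ * ‖θ₁ - θ₂‖)
    (lam : Fin m → ℝ) (hlam : lam ∈ stdSimplex ℝ (Fin m))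
    (θ : EuclideanSpace ℝ (Fin d))
    (dvec : EuclideanSpace ℝ (Fin d)) (hdvec : dvec = ∑ i, lam i • gradient (f i) θ)
    (hip : ∀ i, ⟪gradient (f i) θ, dvec⟫ ≥ ‖dvec‖ ^ 2)
    (α : ℝ) (hα : 0 < α) (hαℓ : α ≤ 1 / ℓ) :
    ∀ i, f i (θ - α • dvec) ≤ f i θ - α / 2 * ‖dvec‖ ^ 2 := by
  intro i
  have key := descent_lemma (f i) ℓ hℓ.le (hdiff i) (hlip i) θ (-(α • dvec))
  have heq : θ + -(α • dvec) = θ - α • dvec := by abel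
  rw [heq] at key
  have hinner : ⟪gradient (f i) θ, -(α • dvec)⟫ = -(α * ⟪gradient (f i) θ, dvec⟫) := by
    rw [inner_neg_right, real_inner_smul_right]
  have hn : ‖-(α • dvec)‖ ^ 2 = α ^ 2 * ‖dvec‖ ^ 2 := by
    rw [norm_neg, norm_smul]
    simp [abs_of_pos hα]
    ring
  rw [hinner, hn] at key
  have h1 : α * ⟪gradient (f i) θ, dvec⟫ ≥ α * ‖dvec‖ ^ 2 :=
    mul_le_mul_of_nonneg_left (hip i) hα.le
  have hℓα : ℓ * α ≤ 1 := by
    rw [le_div_iff₀ hℓ] at hαℓ; linarith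
  have h2 : ℓ / 2 * (α ^ 2 * ‖dvec‖ ^ 2) ≤ α / 2 * ‖dvec‖ ^ 2 := by
    have : ℓ * α * (α * ‖dvec‖ ^ 2) ≤ 1 * (α * ‖dvec‖ ^ 2) := by
      apply mul_le_mul_of_nonneg_right hℓα
      positivity
    nlinarith
  linarith
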